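/- The Half-Cauchy(A) prior arises as a scale mixture: if a has the Inverse-Chi-Squared distribution with 1 degree of freedom and scale 1/A^2 (density proportional to a^{-3/2} exp(-1/(2 A^2 a))), and conditionally on a, sigma^2 has the Inverse-Chi-Squared distribution with 1 degree of freedom and scale 1/a (density proportional to (sigma^2)^{-3/2} exp(-1/(2 a sigma^2))), then the marginal distribution of sigma = sqrt(sigma^2) has density p(sigma) = 2 / (A pi (1 + (sigma/A)^2)) for sigma > 0, i.e., sigma is Half-Cauchy(A). -/

import Mathlib

open Real MeasureTheory

lemma key_integral {b : ℝ} (hb : 0 < b) :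
    ∫ a in Set.Ioi (0:ℝ), a ^ (-(2:ℝ)) * Real.exp (-b / a) = 1 / b := by
  have h := MeasureTheory.integral_comp_rpow_Ioi (fun u => Real.exp (-b * u))
      (p := -1) (by norm_num)
  have h2 : ∫ u in Set.Ioi (0:ℝ), Real.exp (-b * u) = b⁻¹ := by
    have := integral_exp_neg_mul_rpow (p := 1) (b := b) one_pos hb
    simp only [Real.rpow_one] at this
    rw [this]
    norm_num [Real.Gamma_two, Real.rpow_neg_one]
  rw [one_div, ← h2, ← h]
  refine setIntegral_congr_fun measurableSet_Ioi fun x hx => ?_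
  have hx0 : (0:ℝ) < x := hx
  have : x ^ (-1:ℝ) = x⁻¹ := Real.rpow_neg_one x
  simp only [smul_eq_mul, this, abs_neg, abs_one, one_mul]
  norm_num [div_eq_mul_inv, mul_comm]

/-- The Half-Cauchy(A) prior as a scale mixture of Inverse-χ² distributions:
if `a ~ Inverse-χ²(1, 1/A²)` and `σ² | a ~ Inverse-χ²(1, 1/a)`, then the
marginal density of `σ` (obtained by integrating out `a` and changing variables
`σ = √(σ²)`, which multiplies the density of `σ²` at `σ²` by `2σ`) is the
Half-Cauchy(A) density `2 / (A π (1 + (σ/A)²))`. -/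
theorem halfCauchy_as_inverse_chisq_mixture (A : ℝ) (hA : 0 < A) (σ : ℝ) (hσ : 0 < σ) :
    2 * σ * ∫ a in Set.Ioi (0:ℝ),
        ((1 / Real.sqrt (2 * Real.pi * a)) * (σ ^ 2) ^ (-(3:ℝ)/2) *
          Real.exp (-1 / (2 * a * σ ^ 2))) *
        ((1 / (A * Real.sqrt (2 * Real.pi))) * a ^ (-(3:ℝ)/2) *
          Real.exp (-1 / (2 * A ^ 2 * a)))
      = 2 / (A * Real.pi * (1 + (σ / A) ^ 2)) := by
  set b : ℝ := 1 / (2 * σ ^ 2) + 1 / (2 * A ^ 2) with hb_def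
  have hb : 0 < b := by positivity
  set C : ℝ := (1 / Real.sqrt (2 * Real.pi)) * (σ ^ 2) ^ (-(3:ℝ)/2) *
      (1 / (A * Real.sqrt (2 * Real.pi))) with hC_def
  have hcongr : ∫ a in Set.Ioi (0:ℝ),
        ((1 / Real.sqrt (2 * Real.pi * a)) * (σ ^ 2) ^ (-(3:ℝ)/2) *
          Real.exp (-1 / (2 * a * σ ^ 2))) *
        ((1 / (A * Real.sqrt (2 * Real.pi))) * a ^ (-(3:ℝ)/2) *
          Real.exp (-1 / (2 * A ^ 2 * a)))
      = ∫ a in Set.Ioi (0:ℝ), C * (a ^ (-(2:ℝ)) * Real.exp (-b / a)) := by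
    refine setIntegral_congr_fun measurableSet_Ioi fun a ha => ?_
    have ha0 : (0:ℝ) < a := ha
    have hs : Real.sqrt (2 * Real.pi * a) = Real.sqrt (2 * Real.pi) * Real.sqrt a := by
      rw [Real.sqrt_mul (by positivity)]
    have hsa : Real.sqrt a = a ^ ((1:ℝ)/2) := Real.sqrt_eq_rpow a
    have hpow : a ^ (-(3:ℝ)/2) * (a ^ ((1:ℝ)/2))⁻¹ = a ^ (-(2:ℝ)) := by
      rw [← Real.rpow_neg ha0.le, ← Real.rpow_add ha0]
      norm_num
    have hexp : Real.exp (-1 / (2 * a * σ ^ 2)) * Real.exp (-1 / (2 * A ^ 2 * a))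
        = Real.exp (-b / a) := by
      rw [← Real.exp_add]
      congr 1
      field_simp [hb_def]
      rw [hb_def]
      field_simp
      ring
    rw [hC_def, hs, hsa]
    rw [← hexp, ← hpow]
    ring
  rw [hcongr, integral_const_mul, key_integral hb]
  have hπ : (0:ℝ) < Real.pi := Real.pi_pos
  have hsq : Real.sqrt (2 * Real.pi) * Real.sqrt (2 * Real.pi) = 2 * Real.pi :=
    Real.mul_self_sqrt (by positivity)
  have hσ3 : (σ ^ 2) ^ (-(3:ℝ)/2) = (σ ^ 3)⁻¹ := by
    rw [← Real.rpow_natCast σ 2, ← Real.rpow_mul hσ.le, ← Real.rpow_natCast σ 3,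
      ← Real.rpow_neg hσ.le]
    norm_num
  rw [hC_def, hσ3]
  have hbne : b ≠ 0 := hb.ne'
  have hsne : Real.sqrt (2 * Real.pi) ≠ 0 := by positivity
  have hsq2 : Real.sqrt 2 * Real.sqrt Real.pi * (Real.sqrt 2 * Real.sqrt Real.pi)
      = 2 * Real.pi := by
    rw [show Real.sqrt 2 * Real.sqrt Real.pi * (Real.sqrt 2 * Real.sqrt Real.pi)
        = (Real.sqrt 2 * Real.sqrt 2) * (Real.sqrt Real.pi * Real.sqrt Real.pi) by ring,
      Real.mul_self_sqrt (by norm_num), Real.mul_self_sqrt hπ.le]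
  rw [hb_def]
  have hs2 : Real.sqrt (2 * Real.pi) ^ 2 = 2 * Real.pi := Real.sq_sqrt (by positivity)
  field_simp
  rw [hs2]
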